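/- Let Q be a quadratic form on a module M over a commutative ring R, and let e : CliffordAlgebra Q ᵍ⊗[R] CliffordAlgebra Q ≃ CliffordAlgebra (Q.prod Q) be an R-algebra isomorphism satisfying e((ι v) ⊗ 1) = ι (v, 0) and e(1 ⊗ (ι w)) = ι (0, w). Let τ be the isometry equivalence of Q.prod Q given by the swap (v, w) ↦ (w, v). Then for all i, j ∈ ℤ/2 and all homogeneous x ∈ evenOdd Q i and y ∈ evenOdd Q j, CliffordAlgebra.map τ (e (x ⊗ y)) = (−1)^{i·j} • e (y ⊗ x), where the exponent i·j ∈ {0,1} is the product of the representatives of i and j. -/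

import Mathlib

open scoped TensorProduct

private lemma zmod2_sign_smul {R A : Type*} [CommRing R] [AddCommGroup A] [Module R A]
    (i j : ZMod 2) (z : A) :
    ((-1 : ℤˣ) ^ (j * i)) • z = ((-1 : R) ^ (i.val * j.val)) • z := by
  have hall : ∀ k : ZMod 2, k = 0 ∨ k = 1 := by decide
  have hi := hall i
  have hj := hall j
  rcases hi with rfl | rfl <;> rcases hj with rfl | rfl <;>
    simp [Units.smul_def, ZMod.val_one]

/-- For `e : CliffordAlgebra Q ᵍ⊗[R] CliffordAlgebra Q ≃ CliffordAlgebra (Q.prod Q)`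
satisfying the generator conditions, and `τ` the swap isometry `(v, w) ↦ (w, v)` of `Q.prod Q`,
for homogeneous `x ∈ evenOdd Q i`, `y ∈ evenOdd Q j` one has
`map τ (e (x ⊗ y)) = (−1)^(i·j) • e (y ⊗ x)`. -/
theorem clifford_prod_equiv_swap_koszul
    {R M : Type*} [CommRing R] [AddCommGroup M] [Module R M]
    (Q : QuadraticForm R M)
    (e : (CliffordAlgebra.evenOdd Q ᵍ⊗[R] CliffordAlgebra.evenOdd Q) ≃ₐ[R]
        CliffordAlgebra (Q.prod Q))
    (he₁ : ∀ v : M, e (CliffordAlgebra.ι Q v ᵍ⊗ₜ[R] (1 : CliffordAlgebra Q)) =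
        CliffordAlgebra.ι (Q.prod Q) (v, 0))
    (he₂ : ∀ w : M, e ((1 : CliffordAlgebra Q) ᵍ⊗ₜ[R] CliffordAlgebra.ι Q w) =
        CliffordAlgebra.ι (Q.prod Q) (0, w)) :
    ∀ (i j : ZMod 2) (x y : CliffordAlgebra Q),
      x ∈ CliffordAlgebra.evenOdd Q i → y ∈ CliffordAlgebra.evenOdd Q j →
        CliffordAlgebra.map (QuadraticMap.IsometryEquiv.prodComm Q Q).toIsometry
            (e (x ᵍ⊗ₜ[R] y)) =
          ((-1 : R) ^ (i.val * j.val)) • e (y ᵍ⊗ₜ[R] x) := by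
  intro i j x y hx hy
  set τ := (QuadraticMap.IsometryEquiv.prodComm Q Q).toIsometry with hτ
  have h1mem : (1 : CliffordAlgebra Q) ∈ CliffordAlgebra.evenOdd Q 0 :=
    SetLike.GradedOne.one_mem
  -- the two algebra maps agree
  have key : (CliffordAlgebra.map τ).comp e.toAlgHom
      = e.toAlgHom.comp
        (GradedTensorProduct.comm (CliffordAlgebra.evenOdd Q)
          (CliffordAlgebra.evenOdd Q)).toAlgHom := by
    ext v
    · show CliffordAlgebra.map τ (e (CliffordAlgebra.ι Q v ᵍ⊗ₜ[R] 1))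
        = e (GradedTensorProduct.comm _ _ (CliffordAlgebra.ι Q v ᵍ⊗ₜ[R] 1))
      have hc : (CliffordAlgebra.ι Q v ᵍ⊗ₜ[R] (1 : CliffordAlgebra Q))
          = (((⟨CliffordAlgebra.ι Q v, CliffordAlgebra.ι_mem_evenOdd_one Q v⟩ :
              CliffordAlgebra.evenOdd Q 1) : CliffordAlgebra Q) ᵍ⊗ₜ[R]
            ((⟨1, h1mem⟩ : CliffordAlgebra.evenOdd Q 0) : CliffordAlgebra Q) :
            CliffordAlgebra.evenOdd Q ᵍ⊗[R] CliffordAlgebra.evenOdd Q) := rfl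
      rw [he₁, CliffordAlgebra.map_apply_ι, hc, GradedTensorProduct.comm_coe_tmul_coe]
      simp [he₂, hτ]
    · show CliffordAlgebra.map τ (e ((1 : CliffordAlgebra Q) ᵍ⊗ₜ[R] CliffordAlgebra.ι Q v))
        = e (GradedTensorProduct.comm _ _ ((1 : CliffordAlgebra Q) ᵍ⊗ₜ[R] CliffordAlgebra.ι Q v))
      have hc : ((1 : CliffordAlgebra Q) ᵍ⊗ₜ[R] CliffordAlgebra.ι Q v)
          = (((⟨1, h1mem⟩ : CliffordAlgebra.evenOdd Q 0) : CliffordAlgebra Q) ᵍ⊗ₜ[R]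
            ((⟨CliffordAlgebra.ι Q v, CliffordAlgebra.ι_mem_evenOdd_one Q v⟩ :
              CliffordAlgebra.evenOdd Q 1) : CliffordAlgebra Q) :
            CliffordAlgebra.evenOdd Q ᵍ⊗[R] CliffordAlgebra.evenOdd Q) := rfl
      rw [he₂, CliffordAlgebra.map_apply_ι, hc, GradedTensorProduct.comm_coe_tmul_coe]
      simp [he₁, hτ]
  have hkey := DFunLike.congr_fun key (x ᵍ⊗ₜ[R] y)
  simp only [AlgHom.coe_comp, Function.comp_apply, AlgEquiv.toAlgHom_apply,
    AlgHom.coe_coe] at hkey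
  have hc : (x ᵍ⊗ₜ[R] y)
      = (((⟨x, hx⟩ : CliffordAlgebra.evenOdd Q i) : CliffordAlgebra Q) ᵍ⊗ₜ[R]
        ((⟨y, hy⟩ : CliffordAlgebra.evenOdd Q j) : CliffordAlgebra Q) :
        CliffordAlgebra.evenOdd Q ᵍ⊗[R] CliffordAlgebra.evenOdd Q) := rfl
  rw [hkey, hc, GradedTensorProduct.comm_coe_tmul_coe]
  rw [zmod2_sign_smul (R := R) i j, map_smul]
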